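/- Let M be a non-archimedean real closed field and let N be an o-minimal structure expanding the ordered field M, i.e. every N-definable subset of M is a finite union of points and open intervals (with endpoints in M or ±∞). Let X ⊆ M^k and let f : X → M be definable in N. Suppose that for every x ∈ X there is a positive integer n with 1/n < f(x) < n. Then there is a single positive integer n such that 1/n < f(x) < n for all x ∈ X. -/

import Mathlib

open Set

/-- A *structure on `M` in the sense of definability*: the collection of its definable sets
(with parameters), one family in each arity, closed under the first-order operations and
containing the graphs of addition and multiplication, the order, and all singletons
(parameters). -/
structure DefClass (M : Type*) [Field M] [LinearOrder M] [IsStrictOrderedRing M] where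
  carrier : ∀ n : ℕ, Set (Set (Fin n → M))
  mem_reindex : ∀ {m n : ℕ} (σ : Fin m → Fin n) {A : Set (Fin m → M)},
      A ∈ carrier m → {x : Fin n → M | (fun i => x (σ i)) ∈ A} ∈ carrier n
  mem_inter : ∀ {n : ℕ} {A B : Set (Fin n → M)},
      A ∈ carrier n → B ∈ carrier n → A ∩ B ∈ carrier n
  mem_compl : ∀ {n : ℕ} {A : Set (Fin n → M)}, A ∈ carrier n → Aᶜ ∈ carrier n
  mem_proj : ∀ {n : ℕ} {A : Set (Fin (n + 1) → M)}, A ∈ carrier (n + 1) →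
      {x : Fin n → M | ∃ y : M, Fin.snoc x y ∈ A} ∈ carrier n
  mem_add : {x : Fin 3 → M | x 0 + x 1 = x 2} ∈ carrier 3
  mem_mul : {x : Fin 3 → M | x 0 * x 1 = x 2} ∈ carrier 3
  mem_lt : {x : Fin 2 → M | x 0 < x 1} ∈ carrier 2
  mem_const : ∀ c : M, {x : Fin 1 → M | x 0 = c} ∈ carrier 1

variable {M : Type*} [Field M] [LinearOrder M] [IsStrictOrderedRing M]

/-- A subset of `M` is definable in the structure `S`. -/
def DefClass.DefSet1 (S : DefClass M) (A : Set M) : Prop :=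
  {x : Fin 1 → M | x 0 ∈ A} ∈ S.carrier 1

/-- A unary function is definable in the structure `S` (its graph is definable). -/
def DefClass.DefFun1 (S : DefClass M) (f : M → M) : Prop :=
  {x : Fin 2 → M | x 1 = f (x 0)} ∈ S.carrier 2

/-- An `n`-ary function is definable in the structure `S` (its graph is definable). -/
def DefClass.DefFun (S : DefClass M) {n : ℕ} (f : (Fin n → M) → M) : Prop :=
  {x : Fin (n + 1) → M | x (Fin.last n) = f (fun i => x (Fin.castSucc i))} ∈ S.carrier (n + 1)

/-- The open interval of `M` with (possibly infinite) endpoints `p.1`, `p.2`;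
`none` codes `-∞` (resp. `+∞`). -/
def ointerval (p : Option M × Option M) : Set M :=
  {x : M | (∀ a ∈ p.1, a < x) ∧ ∀ b ∈ p.2, x < b}

/-- `A` is a finite union of points and open intervals (with endpoints in `M` or `±∞`). -/
def FinUnionPtsIntervals (A : Set M) : Prop :=
  ∃ (P : Finset M) (I : Finset (Option M × Option M)),
    A = ↑P ∪ ⋃ p ∈ I, ointerval p

/-- The structure `S` is o-minimal: every definable subset of `M` is a finite union of
points and open intervals. -/
def DefClass.IsOMinimal (S : DefClass M) : Prop :=
  ∀ A : Set M, S.DefSet1 A → FinUnionPtsIntervals A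

/-- The structure `S` is polynomially bounded. -/
def DefClass.PolyBounded (S : DefClass M) : Prop :=
  ∀ f : M → M, S.DefFun1 f → ∃ (N : ℕ) (x₀ : M), ∀ x : M, x₀ ≤ x → |f x| ≤ x ^ N

/-- `M` is a non-archimedean ordered field: some element exceeds every natural number. -/
def NonArchimedean (M : Type*) [Field M] [LinearOrder M] [IsStrictOrderedRing M] : Prop :=
  ∃ c : M, ∀ n : ℕ, (n : M) < c

/-- `M` is a real closed field: every nonnegative element is a square and every polynomial
of odd degree has a root. -/
def IsRealClosedField (M : Type*) [Field M] [LinearOrder M] [IsStrictOrderedRing M] : Prop :=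
  (∀ x : M, 0 ≤ x → ∃ y : M, y ^ 2 = x) ∧
    ∀ p : Polynomial M, Odd p.natDegree → ∃ x : M, p.eval x = 0


section Aux

variable {M : Type*} [Field M] [LinearOrder M] [IsStrictOrderedRing M]

/-- Projecting away all but the first coordinate. -/
lemma DefClassAux.proj_to_one (carrier : ∀ n : ℕ, Set (Set (Fin n → M)))
    (mem_proj : ∀ {n : ℕ} {A : Set (Fin (n + 1) → M)}, A ∈ carrier (n + 1) →
      {x : Fin n → M | ∃ y : M, Fin.snoc x y ∈ A} ∈ carrier n) :
    ∀ (k : ℕ) (A : Set (Fin (k + 1) → M)), A ∈ carrier (k + 1) →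
      {v : Fin 1 → M | ∃ y : Fin k → M, Fin.cons (v 0) y ∈ A} ∈ carrier 1 := by
  intro k
  induction k with
  | zero =>
    intro A hA
    have : {v : Fin 1 → M | ∃ y : Fin 0 → M, Fin.cons (v 0) y ∈ A} = A := by
      ext v
      constructor
      · rintro ⟨y, hy⟩
        have : Fin.cons (v 0) y = v := by
          funext i
          have : i = 0 := Fin.fin_one_eq_zero i
          subst this
          simp
        rwa [this] at hy
      · intro hv
        refine ⟨Fin.elim0, ?_⟩
        have : Fin.cons (v 0) Fin.elim0 = v := by
          funext i
          have : i = 0 := Fin.fin_one_eq_zero i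
          subst this
          simp
        rwa [this]
    rw [this]; exact hA
  | succ k ih =>
    intro A hA
    have h1 : {x : Fin (k + 1) → M | ∃ y : M, Fin.snoc x y ∈ A} ∈ carrier (k + 1) :=
      mem_proj hA
    have h2 := ih _ h1
    have : {v : Fin 1 → M | ∃ y : Fin k → M, Fin.cons (v 0) y ∈
        {x : Fin (k + 1) → M | ∃ b : M, Fin.snoc x b ∈ A}}
        = {v : Fin 1 → M | ∃ y : Fin (k + 1) → M, Fin.cons (v 0) y ∈ A} := by
      ext v
      simp only [Set.mem_setOf_eq]
      constructor
      · rintro ⟨y, b, hb⟩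
        exact ⟨Fin.snoc y b, by rwa [Fin.cons_snoc_eq_snoc_cons]⟩
      · rintro ⟨y, hy⟩
        refine ⟨Fin.init y, y (Fin.last k), ?_⟩
        rw [← Fin.cons_snoc_eq_snoc_cons, Fin.snoc_init_self]
        exact hy
    rw [this] at h2
    exact h2

/-- Uniform bound over a finite set. -/
lemma finsetBound {α : Type*} (s : Finset α) (Q : α → ℕ → Prop)
    (mono : ∀ a (m n : ℕ), m ≤ n → Q a m → Q a n)
    (h : ∀ a ∈ s, ∃ n, 0 < n ∧ Q a n) : ∃ n, 0 < n ∧ ∀ a ∈ s, Q a n := by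
  classical
  induction s using Finset.induction with
  | empty => exact ⟨1, one_pos, by simp⟩
  | @insert a s ha ih =>
    obtain ⟨n1, hn1, hQ1⟩ := h a (Finset.mem_insert_self a s)
    obtain ⟨n2, hn2, hQ2⟩ := ih (fun b hb => h b (Finset.mem_insert_of_mem hb))
    refine ⟨max n1 n2, lt_of_lt_of_le hn1 (le_max_left _ _), ?_⟩
    intro b hb
    rcases Finset.mem_insert.1 hb with rfl | hb
    · exact mono b n1 _ (le_max_left _ _) hQ1
    · exact mono b n2 _ (le_max_right _ _) (hQ2 b hb)

lemma one_div_antitone_nat {m n : ℕ} (hm : 0 < m) (h : m ≤ n) :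
    (1 : M) / n ≤ 1 / m :=
  one_div_le_one_div_of_le (by exact_mod_cast hm) (by exact_mod_cast h)

/-- The key order-theoretic fact about one interval. -/
lemma intervalBound (h_na : NonArchimedean M) (Y : Set M)
    (hY : ∀ y ∈ Y, ∃ n : ℕ, 0 < n ∧ 1 / (n : M) < y ∧ y < n)
    (p : Option M × Option M) (hsub : ointerval p ⊆ Y) :
    ∃ n : ℕ, 0 < n ∧ ∀ y ∈ ointerval p, 1 / (n : M) < y ∧ y < n := by
  obtain ⟨c, hc⟩ := h_na
  by_cases hne : (ointerval p).Nonempty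
  swap
  · exact ⟨1, one_pos, fun y hy => absurd ⟨y, hy⟩ hne⟩
  obtain ⟨y0, hy0⟩ := hne
  obtain ⟨hy0l, hy0r⟩ := hy0
  -- the right endpoint is finite
  obtain ⟨b, hb⟩ : ∃ b : M, p.2 = some b := by
    rcases hp2 : p.2 with _ | b
    · exfalso
      have hz : max y0 c ∈ ointerval p := by
        constructor
        · intro a ha
          exact lt_of_lt_of_le (hy0l a ha) (le_max_left _ _)
        · intro b hb
          rw [hp2] at hb
          simp at hb
      obtain ⟨n, hn, -, h2⟩ := hY _ (hsub hz)
      exact absurd (lt_of_le_of_lt (le_max_right y0 c) h2) (not_lt.2 (hc n).le)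
    · exact ⟨b, rfl⟩
  have hy0b : y0 < b := hy0r b (by rw [hb]; rfl)
  -- the right endpoint is bounded by a natural number
  obtain ⟨nb, hnbpos, hnb⟩ : ∃ n : ℕ, 0 < n ∧ b ≤ n := by
    by_contra hcon
    push_neg at hcon
    have hbig : ∀ n : ℕ, (n : M) < b := by
      intro n
      have := hcon (n + 1) (Nat.succ_pos n)
      push_cast at this
      linarith
    have hz : max y0 (b - 1) ∈ ointerval p := by
      constructor
      · intro a ha
        exact lt_of_lt_of_le (hy0l a ha) (le_max_left _ _)
      · intro b' hb'
        rw [hb] at hb'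
        obtain rfl : b' = b := by simpa using hb'.symm
        exact max_lt hy0b (by linarith)
    obtain ⟨n, hn, -, h2⟩ := hY _ (hsub hz)
    have : (n : M) < b - 1 := by
      have := hbig (n + 1); push_cast at this; linarith
    have := le_max_right y0 (b - 1)
    linarith
  -- the left endpoint is finite
  obtain ⟨a, ha⟩ : ∃ a : M, p.1 = some a := by
    rcases hp1 : p.1 with _ | a
    · exfalso
      have hz : min y0 0 ∈ ointerval p := by
        constructor
        · intro a ha
          rw [hp1] at ha; simp at ha
        · intro b' hb'
          exact lt_of_le_of_lt (min_le_left _ _) (hy0r b' hb')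
      obtain ⟨n, hn, h1, -⟩ := hY _ (hsub hz)
      have hn' : (0:M) < n := by exact_mod_cast hn
      have : (0:M) < 1 / n := by positivity
      have := min_le_right y0 (0:M)
      linarith
    · exact ⟨a, rfl⟩
  have hay0 : a < y0 := hy0l a (by rw [ha]; rfl)
  -- the left endpoint is bounded below by 1/n
  obtain ⟨na, hnapos, hna⟩ : ∃ n : ℕ, 0 < n ∧ 1 / (n : M) ≤ a := by
    by_contra hcon
    push_neg at hcon
    have hsmall : ∀ n : ℕ, 0 < n → a < 1 / (n : M) := fun n hn => hcon n hn
    have hc0 : (0:M) < c := lt_of_le_of_lt (by exact_mod_cast Nat.zero_le 1) (hc 1)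
    have hepos : (0:M) < 1 / c := by positivity
    have hz : min y0 (a + 1 / c) ∈ ointerval p := by
      constructor
      · intro a' ha'
        rw [ha] at ha'
        obtain rfl : a' = a := by simpa using ha'.symm
        exact lt_min hay0 (by linarith)
      · intro b' hb'
        exact lt_of_le_of_lt (min_le_left _ _) (hy0r b' hb')
    obtain ⟨n, hn, h1, -⟩ := hY _ (hsub hz)
    have hnM : (0:M) < n := by exact_mod_cast hn
    have h2n : a < 1 / ((2 * n : ℕ) : M) := hsmall (2 * n) (by positivity)
    have heps : 1 / c < 1 / ((2 * n : ℕ) : M) := by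
      apply one_div_lt_one_div_of_lt
      · positivity
      · exact hc (2 * n)
    have hsum : 1 / ((2 * n : ℕ) : M) + 1 / ((2 * n : ℕ) : M) = 1 / (n : M) := by
      push_cast
      rw [← add_div]
      rw [show (2 : M) * n = n * 2 by ring]
      rw [div_mul_eq_div_div_swap]
      norm_num
    have hmin : min y0 (a + 1 / c) ≤ a + 1 / c := min_le_right _ _
    linarith
  -- combine
  refine ⟨max na nb, lt_of_lt_of_le hnapos (le_max_left _ _), ?_⟩
  intro y hy
  obtain ⟨hyl, hyr⟩ := hy
  have hay : a < y := hyl a (by rw [ha]; rfl)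
  have hyb : y < b := hyr b (by rw [hb]; rfl)
  constructor
  · calc 1 / ((max na nb : ℕ) : M) ≤ 1 / (na : M) :=
          one_div_antitone_nat hnapos (le_max_left _ _)
      _ ≤ a := hna
      _ < y := hay
  · calc y < b := hyb
      _ ≤ (nb : M) := hnb
      _ ≤ ((max na nb : ℕ) : M) := by exact_mod_cast le_max_right na nb

end Aux

/-- **Proposition 3.1 of the paper.** Let `M` be a non-archimedean real closed field and
let `N` be an o-minimal structure expanding the ordered field `M`. Let `X ⊆ M^k` and let
`f : X → M` be definable in `N` (i.e. `X` and the graph of `f` on `X` are definable).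
If for every `x ∈ X` there is a positive integer `n` with `1/n < f x < n`, then there is a
single positive integer `n` such that `1/n < f x < n` for all `x ∈ X`. -/
theorem definable_unit_valued_is_unit {M : Type*} [Field M] [LinearOrder M] [IsStrictOrderedRing M]
    (h_na : NonArchimedean M) (h_rc : IsRealClosedField M)
    (N : DefClass M) (h_omin : N.IsOMinimal)
    {k : ℕ} (X : Set (Fin k → M)) (f : (Fin k → M) → M)
    (hX : X ∈ N.carrier k)
    (hf : {x : Fin (k + 1) → M | (fun i => x (Fin.castSucc i)) ∈ X ∧
        x (Fin.last k) = f (fun i => x (Fin.castSucc i))} ∈ N.carrier (k + 1))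
    (h_unit_vals : ∀ x ∈ X, ∃ n : ℕ, 0 < n ∧ 1 / (n : M) < f x ∧ f x < n) :
    ∃ n : ℕ, 0 < n ∧ ∀ x ∈ X, 1 / (n : M) < f x ∧ f x < n := by
  classical
  set Y : Set M := f '' X with hYdef
  -- the image `Y` is definable
  set σ : Fin (k + 1) → Fin (k + 1) :=
    Fin.snoc (fun j : Fin k => Fin.succ j) (0 : Fin (k + 1)) with hσ
  have hA := N.mem_reindex σ hf
  have hproj := DefClassAux.proj_to_one N.carrier (fun {n A} h => N.mem_proj h) k _ hA
  have hYset : {v : Fin 1 → M | v 0 ∈ Y} ∈ N.carrier 1 := by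
    have heq : {v : Fin 1 → M | ∃ y : Fin k → M, Fin.cons (v 0) y ∈
        {x : Fin (k + 1) → M | (fun i => x (σ i)) ∈
          {x : Fin (k + 1) → M | (fun i => x (Fin.castSucc i)) ∈ X ∧
            x (Fin.last k) = f (fun i => x (Fin.castSucc i))}}}
        = {v : Fin 1 → M | v 0 ∈ Y} := by
      ext v
      simp only [Set.mem_setOf_eq, hσ, Fin.snoc_castSucc, Fin.snoc_last, Fin.cons_succ,
        Fin.cons_zero]
      constructor
      · rintro ⟨y, hy1, hy2⟩
        exact ⟨y, hy1, hy2.symm⟩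
      · rintro ⟨y, hy1, hy2⟩
        exact ⟨y, hy1, hy2.symm⟩
    rw [heq] at hproj
    exact hproj
  have hY : ∀ y ∈ Y, ∃ n : ℕ, 0 < n ∧ 1 / (n : M) < y ∧ y < n := by
    rintro y ⟨x, hx, rfl⟩
    exact h_unit_vals x hx
  obtain ⟨P, I, hdec⟩ := h_omin Y hYset
  have mono1 : ∀ (a : M) (m n : ℕ), m ≤ n →
      (1 / (m : M) < a ∧ a < m) → (1 / (n : M) < a ∧ a < n) := by
    rintro a m n hmn ⟨h1, h2⟩
    rcases Nat.eq_zero_or_pos m with rfl | hm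
    · norm_num at h1 h2; exfalso; linarith
    · exact ⟨lt_of_le_of_lt (one_div_antitone_nat hm hmn) h1,
        lt_of_lt_of_le h2 (by exact_mod_cast hmn)⟩
  obtain ⟨nP, hnP, hQP⟩ : ∃ n : ℕ, 0 < n ∧ ∀ q ∈ P, 1 / (n : M) < q ∧ q < n := by
    refine finsetBound P (fun q n => 1 / (n : M) < q ∧ q < n) mono1 ?_
    intro q hq
    exact hY q (by rw [hdec]; exact Or.inl hq)
  obtain ⟨nI, hnI, hQI⟩ : ∃ n : ℕ, 0 < n ∧ ∀ p ∈ I,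
      ∀ y ∈ ointerval p, 1 / (n : M) < y ∧ y < n := by
    refine finsetBound I (fun p n => ∀ y ∈ ointerval p, 1 / (n : M) < y ∧ y < n)
      (fun p m n hmn h y hy => mono1 y m n hmn (h y hy)) ?_
    intro p hp
    refine intervalBound h_na Y hY p ?_
    intro y hy
    rw [hdec]
    exact Or.inr (Set.mem_biUnion hp hy)
  refine ⟨max nP nI, lt_of_lt_of_le hnP (le_max_left _ _), ?_⟩
  intro x hx
  have hfx : f x ∈ Y := ⟨x, hx, rfl⟩
  rw [hdec] at hfx
  rcases hfx with hfx | hfx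
  · exact mono1 _ nP _ (le_max_left _ _) (hQP _ hfx)
  · obtain ⟨p, hp, hy⟩ := Set.mem_iUnion₂.1 hfx
    exact mono1 _ nI _ (le_max_right _ _) (hQI p hp _ hy)
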